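/- Let e ≥ 2 and let |λ, s⟩ be a charged bipartition which is a source vertex of the ŝl_e-crystal (i.e. it has no good removable i-box for any i ∈ ℤ/eℤ) and which has exactly one good addable box over all residues; let i ∈ ℤ/eℤ be its residue and b the good addable i-box. Then the charged bipartition |λ ∪ {b}, s⟩ obtained by adding the box b to λ has a good addable i-box and a good addable (i−1)-box; in particular it has good addable boxes of two distinct residues. -/

import Mathlib

namespace GUnBranching

/-- A partition, given by its (0-indexed) weakly decreasing, eventually zero
sequence of parts: `part k` is the (k+1)-st part `λ_{k+1}`. -/
structure Partition where
  part : ℕ → ℕ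
  antitone : ∀ i j : ℕ, i ≤ j → part j ≤ part i
  eventually_zero : ∃ N : ℕ, ∀ n : ℕ, N ≤ n → part n = 0

namespace Partition

/-- The set of boxes (row, column) (0-indexed) of the Young diagram of a partition. -/
def boxSet (p : Partition) : Set (ℕ × ℕ) := {b | b.2 < p.part b.1}

/-- The size `|λ|` of a partition: the number of boxes of its Young diagram. -/
noncomputable def size (p : Partition) : ℕ := p.boxSet.ncard

/-- The β-set `β(λ) = {λ_k - k + 1 : k ≥ 1}` (0-indexed: `{part k - k : k ∈ ℕ}`). -/
def betaSet (p : Partition) : Set ℤ := {z | ∃ k : ℕ, z = (p.part k : ℤ) - k}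

/-- The charged β-set `{λ_k + s - k + 1 : k ≥ 1}` of `(λ, s)`. -/
def chargedBetaSet (p : Partition) (s : ℤ) : Set ℤ :=
  {z | ∃ k : ℕ, z = (p.part k : ℤ) + s - k}

/-- The number of (nonzero) parts of a partition. -/
noncomputable def length (p : Partition) : ℕ := {k : ℕ | p.part k ≠ 0}.ncard

end Partition

/-- The empty partition `∅`. -/
def emptyPartition : Partition :=
  ⟨fun _ => 0, fun _ _ _ => le_rfl, ⟨0, fun _ _ => rfl⟩⟩

/-- The partition `3^a 2^b 1^c` (a parts equal to 3, b parts equal to 2, c parts equal to 1). -/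
def threeTwoOne (a b c : ℕ) : Partition where
  part k := if k < a then 3 else if k < a + b then 2 else if k < a + b + c then 1 else 0
  antitone i j h := by (try dsimp only); split_ifs <;> omega
  eventually_zero := ⟨a + b + c, fun n hn => by (try dsimp only); split_ifs <;> omega⟩

/-- The column partition `1^m`. -/
def column (m : ℕ) : Partition := threeTwoOne 0 0 m

/-- The staircase partition `Δ_t = (t, t-1, …, 2, 1)`. -/
def staircase (t : ℕ) : Partition where
  part k := t - k
  antitone i j h := Nat.sub_le_sub_left h t
  eventually_zero := ⟨t, fun n hn => Nat.sub_eq_zero_of_le hn⟩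

/-- The partition `Δ_t ⊔ 1^r` (staircase with a column of `r` extra parts equal to 1). -/
def staircaseColumn (t r : ℕ) : Partition where
  part k := if k < t then t - k else if k < t + r then 1 else 0
  antitone i j h := by (try dsimp only); split_ifs <;> omega
  eventually_zero := ⟨t + r, fun n hn => by (try dsimp only); split_ifs <;> omega⟩

/-- `p ⊔ 1^r` : append `r` extra parts equal to 1 to the partition `p`. -/
noncomputable def appendOnes (p : Partition) (r : ℕ) : Partition where
  part k := max (p.part k) (if k < p.length + r then 1 else 0)
  antitone i j h := max_le_max (p.antitone i j h) (by split_ifs <;> omega)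
  eventually_zero := by
    obtain ⟨N, hN⟩ := p.eventually_zero
    refine ⟨max N (p.length + r), fun n hn => ?_⟩
    have h1 : p.part n = 0 := hN n (le_trans (le_max_left _ _) hn)
    have h2 : ¬ n < p.length + r := by
      have := le_trans (le_max_right N (p.length + r)) hn
      omega
    simp [h1, h2]

/-- `mu` is obtained from `lam` by removing one rim `e`-hook: on β-sets, a bead `x`
with an empty spot at `x - e` is moved to `x - e`. -/
def RemoveHook (e : ℕ) (lam mu : Partition) : Prop :=
  ∃ x : ℤ, x ∈ lam.betaSet ∧ (x - e) ∉ lam.betaSet ∧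
    mu.betaSet = insert (x - e) (lam.betaSet \ {x})

/-- A partition is an `e`-core if no rim `e`-hook can be removed from it. -/
def IsECore (e : ℕ) (p : Partition) : Prop := ∀ mu : Partition, ¬ RemoveHook e p mu

/-- `core` is the `e`-core of `lam`: it is obtained from `lam` by repeatedly removing
rim `e`-hooks, and no further rim `e`-hook can be removed. -/
def HasECore (e : ℕ) (lam core : Partition) : Prop :=
  Relation.ReflTransGen (RemoveHook e) lam core ∧ IsECore e core

/-- `lam` and `mu` have the same `e`-core. -/
def SameECore (e : ℕ) (lam mu : Partition) : Prop :=
  ∃ core : Partition, HasECore e lam core ∧ HasECore e mu core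

/-- `(q1, q2)` is the 2-quotient of `lam`: the odd (resp. even) β-numbers of `lam`,
transformed by `v ↦ (v+1)/2` (resp. `v ↦ v/2`), form the β-set of `q1` (resp. `q2`)
for a suitable charge. -/
def IsTwoQuotient (lam q1 q2 : Partition) : Prop :=
  (∃ c : ℤ, q1.chargedBetaSet c = {z : ℤ | 2 * z - 1 ∈ lam.betaSet}) ∧
  (∃ c : ℤ, q2.chargedBetaSet c = {z : ℤ | 2 * z ∈ lam.betaSet})

/-- The charge `s_t`: `(-(t+1+e)/2, t/2)` for even `t`, `(-(t+1)/2, (t+e)/2)` for odd `t`. -/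
def tauCharge (e t : ℕ) : ℤ × ℤ :=
  if t % 2 = 0 then (-(((t : ℤ) + 1 + e) / 2), (t : ℤ) / 2)
  else (-(((t : ℤ) + 1) / 2), ((t : ℤ) + e) / 2)

/-- `bp` is the twisted 2-quotient `τ(lam)` of `lam`, a partition with 2-core `Δ_t`:
it is the 2-quotient for even `t` and the swapped 2-quotient for odd `t`; the
corresponding charge is `tauCharge e t`. -/
def IsTwistedQuotient (t : ℕ) (lam : Partition) (bp : Partition × Partition) : Prop :=
  HasECore 2 lam (staircase t) ∧
  (if t % 2 = 0 then IsTwoQuotient lam bp.1 bp.2 else IsTwoQuotient lam bp.2 bp.1)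

/-- The abacus of a charged bipartition: positions are (column, row) where row
`0 : Fin 2` is the bottom row (first component, charge `s.1`) and row `1 : Fin 2`
the top row (second component, charge `s.2`). -/
def abacus (bp : Partition × Partition) (s : ℤ × ℤ) : Set (ℤ × Fin 2) :=
  {b | b.1 ∈ (if b.2 = (0 : Fin 2) then bp.1.chargedBetaSet s.1 else bp.2.chargedBetaSet s.2)}

/-- `P` is an `e`-period of the abacus `A`: beads `(x, r 0), (x-1, r 1), …, (x-e+1, r (e-1))`
of `A` where `x` is the largest column containing a bead of `A`, `r i = 0` (bottom row)
whenever `(x - i, bottom)` is a bead of `A` (for `i < e-1`), and once in the bottom row the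
period stays in the bottom row. -/
def IsEPeriodOf (e : ℕ) (A P : Set (ℤ × Fin 2)) : Prop :=
  ∃ (x : ℤ) (r : ℕ → Fin 2),
    P = {b | ∃ i : ℕ, i < e ∧ b = ((x - i : ℤ), r i)} ∧
    (∀ i : ℕ, i < e → ((x - i : ℤ), r i) ∈ A) ∧
    (∀ b ∈ A, b.1 ≤ x) ∧
    (∀ i : ℕ, i + 1 < e → ((x - i : ℤ), (0 : Fin 2)) ∈ A → r i = 0) ∧
    (∀ i : ℕ, i + 1 < e → r i = 0 → r (i + 1) = 0)

/-- `P 0, P 1, P 2, …` is the sequence of `e`-periods of `A`: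
each `P k` is the `e`-period of `A` minus the previous periods. -/
def IsPeriodSeq (e : ℕ) (A : Set (ℤ × Fin 2)) (P : ℕ → Set (ℤ × Fin 2)) : Prop :=
  ∀ k : ℕ, IsEPeriodOf e (A \ ⋃ i ∈ Finset.range k, P i) (P k)

/-- The abacus `A` is totally `e`-periodic: the `k`-th `e`-period exists for every `k`. -/
def TotallyPeriodic (e : ℕ) (A : Set (ℤ × Fin 2)) : Prop :=
  ∃ P : ℕ → Set (ℤ × Fin 2), IsPeriodSeq e A P

/-- `P` is the `(k+1)`-st `e`-period of `A` (so `k = 0` gives the first `e`-period). -/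
def IsKthPeriod (e : ℕ) (A : Set (ℤ × Fin 2)) (k : ℕ) (P : Set (ℤ × Fin 2)) : Prop :=
  ∃ Q : ℕ → Set (ℤ × Fin 2),
    (∀ i : ℕ, i ≤ k → IsEPeriodOf e (A \ ⋃ j ∈ Finset.range i, Q j) (Q i)) ∧ Q k = P

/-- Shift a set of abacus positions one step to the right. -/
def shiftRight (P : Set (ℤ × Fin 2)) : Set (ℤ × Fin 2) := {b | (b.1 - 1, b.2) ∈ P}

/-- Edge of the `sl_∞`-crystal moving the `(k+1)`-st `e`-period one step to the right:
the shifted period must again be the `(k+1)`-st `e`-period of the resulting abacus. -/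
def SlInfEdgeAt (e : ℕ) (s : ℤ × ℤ) (k : ℕ) (lam mu : Partition × Partition) : Prop :=
  TotallyPeriodic e (abacus lam s) ∧ TotallyPeriodic e (abacus mu s) ∧
  ∃ P : Set (ℤ × Fin 2),
    IsKthPeriod e (abacus lam s) k P ∧
    abacus mu s = (abacus lam s \ P) ∪ shiftRight P ∧
    IsKthPeriod e (abacus mu s) k (shiftRight P)

/-- Edge of the `sl_∞`-crystal. -/
def SlInfEdge (e : ℕ) (s : ℤ × ℤ) (lam mu : Partition × Partition) : Prop :=
  ∃ k : ℕ, SlInfEdgeAt e s k lam mu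

/-- A source vertex of the `sl_∞`-crystal: a vertex (totally `e`-periodic abacus)
with no incoming edge. -/
def IsSlInfSource (e : ℕ) (s : ℤ × ℤ) (bp : Partition × Partition) : Prop :=
  TotallyPeriodic e (abacus bp s) ∧ ∀ lam : Partition × Partition, ¬ SlInfEdge e s lam bp

/-- A box of a bipartition: (component, row, column), all 0-indexed
(component `0 : Fin 2` is the first component `λ¹`). -/
abbrev Box := Fin 2 × ℕ × ℕ

/-- The component of a bipartition indexed by `j : Fin 2`. -/
def comp (bp : Partition × Partition) (j : Fin 2) : Partition :=
  if j = 0 then bp.1 else bp.2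

/-- `b` is a box of the bipartition `bp`. -/
def IsBoxOf (bp : Partition × Partition) (b : Box) : Prop :=
  b.2.2 < (comp bp b.1).part b.2.1

/-- The (charged) content `ct(b) = y - x + s_j` of a box `b = (j, x, y)`. -/
def content (s : ℤ × ℤ) (b : Box) : ℤ :=
  (b.2.2 : ℤ) - (b.2.1 : ℤ) + (if b.1 = 0 then s.1 else s.2)

/-- `b` is an addable box of the bipartition `bp`. -/
def IsAddable (bp : Partition × Partition) (b : Box) : Prop :=
  b.2.2 = (comp bp b.1).part b.2.1 ∧
  (b.2.1 = 0 ∨ (comp bp b.1).part b.2.1 < (comp bp b.1).part (b.2.1 - 1))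

/-- `b` is a removable box of the bipartition `bp`. -/
def IsRemovable (bp : Partition × Partition) (b : Box) : Prop :=
  b.2.2 + 1 = (comp bp b.1).part b.2.1 ∧
  (comp bp b.1).part (b.2.1 + 1) < (comp bp b.1).part b.2.1

/-- The total order on addable/removable boxes: `b ≤ b'` iff `b = b'`, or
`ct(b) < ct(b')`, or the contents are equal, `b` lies in the second component and
`b'` in the first. -/
def boxLE (s : ℤ × ℤ) (b b' : Box) : Prop :=
  b = b' ∨ content s b < content s b' ∨
    (content s b = content s b' ∧ b.1 = 1 ∧ b'.1 = 0)

/-- The set of addable or removable boxes of residue `i` (the letters of the `i`-word). -/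
def IWord (e : ℕ) (s : ℤ × ℤ) (bp : Partition × Partition) (i : ZMod e) : Set Box :=
  {b | (IsAddable bp b ∨ IsRemovable bp b) ∧ ((content s b : ZMod e) = i)}

/-- A removable box of residue `i` surviving the Kashiwara cancellation: reading the
`i`-word in increasing order and cancelling each removable box with a following addable
box (recursively cancelling adjacent removable-addable pairs), `b` is not cancelled.
Equivalently, every final segment of the `i`-word starting at `b` contains strictly
more removable than addable boxes. -/
def SurvivingRemovable (e : ℕ) (s : ℤ × ℤ) (bp : Partition × Partition)
    (i : ZMod e) (b : Box) : Prop :=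
  b ∈ IWord e s bp i ∧ IsRemovable bp b ∧
  ∀ c ∈ IWord e s bp i, boxLE s b c →
    {d : Box | d ∈ IWord e s bp i ∧ IsAddable bp d ∧ boxLE s b d ∧ boxLE s d c}.ncard <
    {d : Box | d ∈ IWord e s bp i ∧ IsRemovable bp d ∧ boxLE s b d ∧ boxLE s d c}.ncard

/-- The good removable `i`-box: the smallest removable `i`-box surviving the
Kashiwara cancellation. -/
def IsGoodRemovable (e : ℕ) (s : ℤ × ℤ) (bp : Partition × Partition)
    (i : ZMod e) (b : Box) : Prop :=
  SurvivingRemovable e s bp i b ∧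
  ∀ b' : Box, SurvivingRemovable e s bp i b' → boxLE s b b'

/-- An addable box of residue `i` surviving the Kashiwara cancellation. -/
def SurvivingAddable (e : ℕ) (s : ℤ × ℤ) (bp : Partition × Partition)
    (i : ZMod e) (b : Box) : Prop :=
  b ∈ IWord e s bp i ∧ IsAddable bp b ∧
  ∀ c ∈ IWord e s bp i, boxLE s c b →
    {d : Box | d ∈ IWord e s bp i ∧ IsRemovable bp d ∧ boxLE s c d ∧ boxLE s d b}.ncard <
    {d : Box | d ∈ IWord e s bp i ∧ IsAddable bp d ∧ boxLE s c d ∧ boxLE s d b}.ncard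

/-- The good addable `i`-box: the largest addable `i`-box surviving the
Kashiwara cancellation. -/
def IsGoodAddable (e : ℕ) (s : ℤ × ℤ) (bp : Partition × Partition)
    (i : ZMod e) (b : Box) : Prop :=
  SurvivingAddable e s bp i b ∧
  ∀ b' : Box, SurvivingAddable e s bp i b' → boxLE s b' b

/-- A source vertex of the `ŝl_e`-crystal: no good removable `i`-box for any residue `i`. -/
def IsSlESource (e : ℕ) (s : ℤ × ℤ) (bp : Partition × Partition) : Prop :=
  ∀ (i : ZMod e) (b : Box), ¬ IsGoodRemovable e s bp i b

/-- `bp'` is obtained from `bp` by adding the box `b`. -/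
def AddBox (bp : Partition × Partition) (b : Box) (bp' : Partition × Partition) : Prop :=
  if b.1 = 0 then
    bp'.2 = bp.2 ∧ bp'.1.part = Function.update bp.1.part b.2.1 (bp.1.part b.2.1 + 1)
  else
    bp'.1 = bp.1 ∧ bp'.2.part = Function.update bp.2.part b.2.1 (bp.2.part b.2.1 + 1)

/-- Dominance order: `Dominates mu la` means `la ⊴ mu`. -/
def Dominates (mu la : Partition) : Prop :=
  ∀ k : ℕ, ∑ i ∈ Finset.range k, la.part i ≤ ∑ i ∈ Finset.range k, mu.part i

-- Auxiliary development


attribute [local instance] Classical.propDecidable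

/-! ### Abstract word combinatorics on `ℤ` -/

/-- number of `lab`-letters of the word `S` in the window `[c, z]`. -/
noncomputable def cA (S : Set ℤ) (lab : ℤ → Prop) (c z : ℤ) : ℕ :=
  {d | d ∈ S ∧ lab d ∧ c ≤ d ∧ d ≤ z}.ncard

/-- number of non-`lab`-letters of the word `S` in the window `[c, z]`. -/
noncomputable def cR (S : Set ℤ) (lab : ℤ → Prop) (c z : ℤ) : ℕ :=
  {d | d ∈ S ∧ ¬ lab d ∧ c ≤ d ∧ d ≤ z}.ncard

/-- a surviving `lab`-letter (addable). -/
def SA (S : Set ℤ) (lab : ℤ → Prop) (a : ℤ) : Prop :=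
  a ∈ S ∧ lab a ∧ ∀ c ∈ S, c ≤ a → cR S lab c a < cA S lab c a

/-- a surviving non-`lab`-letter (removable). -/
def SR (S : Set ℤ) (lab : ℤ → Prop) (r : ℤ) : Prop :=
  r ∈ S ∧ ¬ lab r ∧ ∀ c ∈ S, r ≤ c → cA S lab r c < cR S lab r c

lemma ncard_sep_insert {X : Set ℤ} (hX : X.Finite) {t : ℤ} (ht : t ∉ X) (Q : ℤ → Prop) :
    {d | d ∈ insert t X ∧ Q d}.ncard = {d | d ∈ X ∧ Q d}.ncard + if Q t then 1 else 0 := by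
  by_cases h : Q t
  · rw [if_pos h]
    have he : {d | d ∈ insert t X ∧ Q d} = insert t {d | d ∈ X ∧ Q d} := by
      ext d
      simp only [Set.mem_insert_iff, Set.mem_setOf_eq]
      constructor
      · rintro ⟨h1 | h1, h2⟩
        · exact Or.inl h1
        · exact Or.inr ⟨h1, h2⟩
      · rintro (h1 | ⟨h1, h2⟩)
        · exact ⟨Or.inl h1, h1 ▸ h⟩
        · exact ⟨Or.inr h1, h2⟩
    rw [he, Set.ncard_insert_of_notMem (fun hc => ht hc.1)
      (hX.subset (fun d hd => hd.1))]
  · rw [if_neg h, show {d | d ∈ insert t X ∧ Q d} = {d | d ∈ X ∧ Q d} from by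
      ext d
      simp only [Set.mem_insert_iff, Set.mem_setOf_eq]
      constructor
      · rintro ⟨h1 | h1, h2⟩
        · exact absurd (h1 ▸ h2) h
        · exact ⟨h1, h2⟩
      · rintro ⟨h1, h2⟩
        exact ⟨Or.inr h1, h2⟩]
    omega

theorem word_main (S : Set ℤ) (hS : S.Finite) (lab : ℤ → Prop) :
    {d | d ∈ S ∧ SA S lab d}.ncard + {d | d ∈ S ∧ ¬ lab d}.ncard
      = {d | d ∈ S ∧ SR S lab d}.ncard + {d | d ∈ S ∧ lab d}.ncard := by
  generalize hn : S.ncard = n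
  induction n using Nat.strong_induction_on generalizing S with
  | _ n IH =>
  by_cases hpair : ∃ r ∈ S, ∃ a ∈ S, ¬ lab r ∧ lab a ∧ r < a
  · -- step case: find an adjacent pair (r, a), remove it
    have hU : {q : ℤ × ℤ | q.1 ∈ S ∧ q.2 ∈ S ∧ ¬ lab q.1 ∧ lab q.2 ∧ q.1 < q.2}.Finite :=
      (hS.prod hS).subset (fun q hq => ⟨hq.1, hq.2.1⟩)
    have hUne : {q : ℤ × ℤ | q.1 ∈ S ∧ q.2 ∈ S ∧ ¬ lab q.1 ∧ lab q.2 ∧ q.1 < q.2}.Nonempty := by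
      obtain ⟨r, hrW, a, haW, h1, h2, h3⟩ := hpair
      exact ⟨(r, a), hrW, haW, h1, h2, h3⟩
    obtain ⟨p, hpU, hmin⟩ := Set.exists_min_image _ (fun q => (q.2 - q.1).toNat) hU hUne
    obtain ⟨hrW, haW, hlr, hla, hra⟩ := hpU
    set r := p.1 with hr'
    set a := p.2 with ha'
    have hno : ∀ z ∈ S, ¬ (r < z ∧ z < a) := by
      rintro z hz ⟨h1, h2⟩
      by_cases lz : lab z
      · have := hmin (r, z) ⟨hrW, hz, hlr, lz, h1⟩
        simp only at this
        omega
      · have := hmin (z, a) ⟨hz, haW, lz, hla, h2⟩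
        simp only at this
        omega
    set S' := S \ {r, a} with hS'
    have hS'f : S'.Finite := hS.subset Set.diff_subset
    have hmemS' : ∀ z, z ∈ S' ↔ z ∈ S ∧ z ≠ r ∧ z ≠ a := by
      intro z
      simp only [hS', Set.mem_diff, Set.mem_insert_iff, Set.mem_singleton_iff]
      tauto
    have hrne : r ≠ a := ne_of_lt hra
    have hrS' : r ∉ S' := by simp [hmemS']
    have haS' : a ∉ S' := by simp [hmemS']
    have hins : S = insert r (insert a S') := by
      ext z
      simp only [Set.mem_insert_iff, hmemS']
      constructor
      · intro hz
        by_cases h1 : z = r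
        · exact Or.inl h1
        · by_cases h2 : z = a
          · exact Or.inr (Or.inl h2)
          · exact Or.inr (Or.inr ⟨hz, h1, h2⟩)
      · rintro (h | h | h)
        · exact h ▸ hrW
        · exact h ▸ haW
        · exact h.1
    have hranotin : r ∉ insert a S' := by
      simp [hmemS', hrne]
    have hsub : S' ⊆ S := fun z hz => ((hmemS' z).1 hz).1
    have hiaf : (insert a S').Finite := hS'f.insert a
    have hcard : S.ncard = S'.ncard + 2 := by
      rw [hins, Set.ncard_insert_of_notMem hranotin hiaf,
        Set.ncard_insert_of_notMem haS' hS'f]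
    -- window splitting
    have hsplit : ∀ (P : ℤ → Prop) (c z : ℤ),
        {d | d ∈ S ∧ P d ∧ c ≤ d ∧ d ≤ z}.ncard
          = {d | d ∈ S' ∧ P d ∧ c ≤ d ∧ d ≤ z}.ncard
            + (if P a ∧ c ≤ a ∧ a ≤ z then 1 else 0)
            + (if P r ∧ c ≤ r ∧ r ≤ z then 1 else 0) := by
      intro P c z
      rw [hins, ncard_sep_insert hiaf hranotin, ncard_sep_insert hS'f haS']
      split_ifs <;> rfl
    have hbridge : ∀ c z : ℤ, c ∈ S' → z ∈ S' → ((c ≤ r ∧ r ≤ z) ↔ (c ≤ a ∧ a ≤ z)) := by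
      intro c z hc hz
      obtain ⟨hcW, hcr, hca⟩ := (hmemS' c).1 hc
      obtain ⟨hzW, hzr, hza⟩ := (hmemS' z).1 hz
      have h1 := hno c hcW
      have h2 := hno z hzW
      constructor
      · rintro ⟨u1, u2⟩
        have hzgt : r < z := lt_of_le_of_ne u2 (Ne.symm hzr)
        refine ⟨by omega, ?_⟩
        rcases lt_or_ge z a with h | h
        · exact absurd ⟨hzgt, h⟩ h2
        · exact h
      · rintro ⟨u1, u2⟩
        have hclt : c < a := lt_of_le_of_ne u1 hca
        refine ⟨?_, by omega⟩
        rcases lt_or_ge r c with h | h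
        · exact absurd ⟨h, hclt⟩ h1
        · exact h
    have hcA : ∀ c z : ℤ, c ∈ S' → z ∈ S' →
        cA S lab c z = cA S' lab c z + (if c ≤ a ∧ a ≤ z then 1 else 0) := by
      intro c z hc hz
      rw [cA, hsplit, ← cA]
      have hnr : ¬ (lab r ∧ c ≤ r ∧ r ≤ z) := fun h => hlr h.1
      rw [if_neg hnr]
      by_cases h : c ≤ a ∧ a ≤ z
      · rw [if_pos ⟨hla, h⟩, if_pos h]
      · rw [if_neg (fun hh => h hh.2), if_neg h]
    have hcR : ∀ c z : ℤ, c ∈ S' → z ∈ S' →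
        cR S lab c z = cR S' lab c z + (if c ≤ a ∧ a ≤ z then 1 else 0) := by
      intro c z hc hz
      rw [cR, hsplit, ← cR]
      have hna : ¬ (¬ lab a ∧ c ≤ a ∧ a ≤ z) := fun h => h.1 hla
      rw [if_neg hna]
      by_cases h : c ≤ a ∧ a ≤ z
      · rw [if_pos ⟨hlr, (hbridge c z hc hz).2 h⟩, if_pos h]
      · rw [if_neg (fun hh => h ((hbridge c z hc hz).1 hh.2)), if_neg h]
    -- transfer of survival for elements of S'
    have hSAiff : ∀ z ∈ S', (SA S lab z ↔ SA S' lab z) := by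
      intro z hzS'
      have hzS : z ∈ S := hsub hzS'
      obtain ⟨_, hzr, hza⟩ := (hmemS' z).1 hzS'
      constructor
      · rintro ⟨_, hlz, hcond⟩
        refine ⟨hzS', hlz, fun c hc hcz => ?_⟩
        have hh := hcond c (hsub hc) hcz
        rw [hcA c z hc hzS', hcR c z hc hzS'] at hh
        split_ifs at hh <;> omega
      · rintro ⟨_, hlz, hcond⟩
        refine ⟨hzS, hlz, fun c hc hcz => ?_⟩
        rw [hins] at hc
        rcases Set.mem_insert_iff.1 hc with rfl | hc2
        · -- c = r
          have h1 : r < z := lt_of_le_of_ne hcz (Ne.symm hzr)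
          have h2 : ¬ z < a := fun hh => hno z hzS ⟨h1, hh⟩
          have hza' : a < z := by omega
          have hTne : z ∈ {d | d ∈ S' ∧ a < d ∧ d ≤ z} := ⟨hzS', hza', le_rfl⟩
          obtain ⟨c0, hc0mem, hc0min⟩ := Set.exists_min_image _ id
            (hS'f.subset (fun d hd => hd.1)) ⟨z, hTne⟩
          obtain ⟨hc0S', hc0a, hc0z⟩ := hc0mem
          have hwin : ∀ P : ℤ → Prop, {d | d ∈ S' ∧ P d ∧ r ≤ d ∧ d ≤ z}
              = {d | d ∈ S' ∧ P d ∧ c0 ≤ d ∧ d ≤ z} := by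
            intro P
            ext d
            simp only [Set.mem_setOf_eq]
            constructor
            · rintro ⟨hdS', hPd, hrd, hdz⟩
              obtain ⟨hdS, hdr, hda⟩ := (hmemS' d).1 hdS'
              have u1 : r < d := lt_of_le_of_ne hrd (Ne.symm hdr)
              have u2 : ¬ d < a := fun hh => hno d hdS ⟨u1, hh⟩
              have u3 : a < d := by omega
              exact ⟨hdS', hPd, hc0min d ⟨hdS', u3, hdz⟩, hdz⟩
            · rintro ⟨hdS', hPd, hcd, hdz⟩
              exact ⟨hdS', hPd, by omega, hdz⟩
          have q1 : cA S lab r z = cA S' lab c0 z + 1 := by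
            rw [cA, hsplit, hwin, ← cA, if_pos ⟨hla, le_of_lt hra, le_of_lt hza'⟩,
              if_neg (fun hh => hlr hh.1)]
          have q2 : cR S lab r z = cR S' lab c0 z + 1 := by
            rw [cR, hsplit, hwin, ← cR, if_neg (fun hh => hh.1 hla),
              if_pos ⟨hlr, le_rfl, le_of_lt (lt_trans hra hza')⟩]
          have := hcond c0 hc0S' hc0z
          omega
        · rcases Set.mem_insert_iff.1 hc2 with rfl | hcS'
          · -- c = a
            have hza' : a < z := lt_of_le_of_ne hcz (Ne.symm hza)
            have hTne : z ∈ {d | d ∈ S' ∧ a < d ∧ d ≤ z} := ⟨hzS', hza', le_rfl⟩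
            obtain ⟨c0, hc0mem, hc0min⟩ := Set.exists_min_image _ id
              (hS'f.subset (fun d hd => hd.1)) ⟨z, hTne⟩
            obtain ⟨hc0S', hc0a, hc0z⟩ := hc0mem
            have hwin : ∀ P : ℤ → Prop, {d | d ∈ S' ∧ P d ∧ a ≤ d ∧ d ≤ z}
                = {d | d ∈ S' ∧ P d ∧ c0 ≤ d ∧ d ≤ z} := by
              intro P
              ext d
              simp only [Set.mem_setOf_eq]
              constructor
              · rintro ⟨hdS', hPd, had, hdz⟩
                obtain ⟨hdS, hdr, hda⟩ := (hmemS' d).1 hdS'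
                have u3 : a < d := lt_of_le_of_ne had (Ne.symm hda)
                exact ⟨hdS', hPd, hc0min d ⟨hdS', u3, hdz⟩, hdz⟩
              · rintro ⟨hdS', hPd, hcd, hdz⟩
                exact ⟨hdS', hPd, by omega, hdz⟩
            have q1 : cA S lab a z = cA S' lab c0 z + 1 := by
              rw [cA, hsplit, hwin, ← cA, if_pos ⟨hla, le_rfl, le_of_lt hza'⟩,
                if_neg (fun hh => hlr hh.1)]
            have q2 : cR S lab a z = cR S' lab c0 z := by
              rw [cR, hsplit, hwin, ← cR, if_neg (fun hh => hh.1 hla),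
                if_neg (fun hh => absurd hh.2.1 (not_le.2 hra))]
              omega
            have := hcond c0 hc0S' hc0z
            omega
          · have hh := hcond c hcS' hcz
            rw [hcA c z hcS' hzS', hcR c z hcS' hzS']
            split_ifs <;> omega
    have hSRiff : ∀ z ∈ S', (SR S lab z ↔ SR S' lab z) := by
      intro z hzS'
      have hzS : z ∈ S := hsub hzS'
      obtain ⟨_, hzr, hza⟩ := (hmemS' z).1 hzS'
      constructor
      · rintro ⟨_, hlz, hcond⟩
        refine ⟨hzS', hlz, fun c hc hcz => ?_⟩
        have hh := hcond c (hsub hc) hcz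
        rw [hcA z c hzS' hc, hcR z c hzS' hc] at hh
        split_ifs at hh <;> omega
      · rintro ⟨_, hlz, hcond⟩
        refine ⟨hzS, hlz, fun c hc hcz => ?_⟩
        rw [hins] at hc
        rcases Set.mem_insert_iff.1 hc with rfl | hc2
        · -- c = r
          have h1 : z < r := lt_of_le_of_ne hcz hzr
          have hTne : z ∈ {d | d ∈ S' ∧ z ≤ d ∧ d < r} := ⟨hzS', le_rfl, h1⟩
          obtain ⟨c0, hc0mem, hc0min⟩ := Set.exists_max_image _ id
            (hS'f.subset (fun d hd => hd.1)) ⟨z, hTne⟩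
          obtain ⟨hc0S', hc0z, hc0r⟩ := hc0mem
          have hwin : ∀ P : ℤ → Prop, {d | d ∈ S' ∧ P d ∧ z ≤ d ∧ d ≤ r}
              = {d | d ∈ S' ∧ P d ∧ z ≤ d ∧ d ≤ c0} := by
            intro P
            ext d
            simp only [Set.mem_setOf_eq]
            constructor
            · rintro ⟨hdS', hPd, hzd, hdr⟩
              obtain ⟨hdS, hdr', hda⟩ := (hmemS' d).1 hdS'
              have u1 : d < r := lt_of_le_of_ne hdr hdr'
              exact ⟨hdS', hPd, hzd, hc0min d ⟨hdS', hzd, u1⟩⟩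
            · rintro ⟨hdS', hPd, hzd, hdc⟩
              exact ⟨hdS', hPd, hzd, by omega⟩
          have q1 : cA S lab z r = cA S' lab z c0 := by
            rw [cA, hsplit, hwin, ← cA, if_neg (fun hh => absurd hh.2.2 (not_le.2 hra)),
              if_neg (fun hh => hlr hh.1)]
            omega
          have q2 : cR S lab z r = cR S' lab z c0 + 1 := by
            rw [cR, hsplit, hwin, ← cR, if_neg (fun hh => absurd hh.2.2 (not_le.2 hra)),
              if_pos ⟨hlr, le_of_lt h1, le_rfl⟩]
          have := hcond c0 hc0S' hc0z
          omega
        · rcases Set.mem_insert_iff.1 hc2 with rfl | hcS'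
          · -- c = a
            have h2 : z < a := lt_of_le_of_ne hcz hza
            have h3 : ¬ r < z := fun hh => hno z hzS ⟨hh, h2⟩
            have h1 : z < r := by omega
            have hTne : z ∈ {d | d ∈ S' ∧ z ≤ d ∧ d < r} := ⟨hzS', le_rfl, h1⟩
            obtain ⟨c0, hc0mem, hc0min⟩ := Set.exists_max_image _ id
              (hS'f.subset (fun d hd => hd.1)) ⟨z, hTne⟩
            obtain ⟨hc0S', hc0z, hc0r⟩ := hc0mem
            have hwin : ∀ P : ℤ → Prop, {d | d ∈ S' ∧ P d ∧ z ≤ d ∧ d ≤ a}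
                = {d | d ∈ S' ∧ P d ∧ z ≤ d ∧ d ≤ c0} := by
              intro P
              ext d
              simp only [Set.mem_setOf_eq]
              constructor
              · rintro ⟨hdS', hPd, hzd, hda'⟩
                obtain ⟨hdS, hdr', hda''⟩ := (hmemS' d).1 hdS'
                have u2 : d < a := lt_of_le_of_ne hda' hda''
                have u3 : ¬ r < d := fun hh => hno d hdS ⟨hh, u2⟩
                have u1 : d < r := by omega
                exact ⟨hdS', hPd, hzd, hc0min d ⟨hdS', hzd, u1⟩⟩
              · rintro ⟨hdS', hPd, hzd, hdc⟩
                exact ⟨hdS', hPd, hzd, by omega⟩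
            have q1 : cA S lab z a = cA S' lab z c0 + 1 := by
              rw [cA, hsplit, hwin, ← cA, if_pos ⟨hla, le_of_lt h2, le_rfl⟩,
                if_neg (fun hh => hlr hh.1)]
            have q2 : cR S lab z a = cR S' lab z c0 + 1 := by
              rw [cR, hsplit, hwin, ← cR, if_neg (fun hh => hh.1 hla),
                if_pos ⟨hlr, le_of_lt h1, le_of_lt hra⟩]
            have := hcond c0 hc0S' hc0z
            omega
          · have hh := hcond c hcS' hcz
            rw [hcA z c hzS' hcS', hcR z c hzS' hcS']
            split_ifs <;> omega
    -- the removed pair does not survive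
    have hAwin0 : {d | d ∈ S' ∧ lab d ∧ r ≤ d ∧ d ≤ a} = (∅ : Set ℤ) := by
      rw [Set.eq_empty_iff_forall_notMem]
      rintro d ⟨hdS', _, hrd, hda⟩
      obtain ⟨hdS, hdr, hda'⟩ := (hmemS' d).1 hdS'
      exact hno d hdS ⟨lt_of_le_of_ne hrd (Ne.symm hdr), lt_of_le_of_ne hda hda'⟩
    have hRwin0 : {d | d ∈ S' ∧ ¬ lab d ∧ r ≤ d ∧ d ≤ a} = (∅ : Set ℤ) := by
      rw [Set.eq_empty_iff_forall_notMem]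
      rintro d ⟨hdS', _, hrd, hda⟩
      obtain ⟨hdS, hdr, hda'⟩ := (hmemS' d).1 hdS'
      exact hno d hdS ⟨lt_of_le_of_ne hrd (Ne.symm hdr), lt_of_le_of_ne hda hda'⟩
    have qA : cA S lab r a = 1 := by
      rw [cA, hsplit, hAwin0, if_pos ⟨hla, le_of_lt hra, le_rfl⟩, if_neg (fun hh => hlr hh.1)]
      simp
    have qR : cR S lab r a = 1 := by
      rw [cR, hsplit, hRwin0, if_neg (fun hh => hh.1 hla), if_pos ⟨hlr, le_rfl, le_of_lt hra⟩]
      simp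
    have hnotSAa : ¬ SA S lab a := by
      rintro ⟨_, _, hcond⟩
      have := hcond r hrW (le_of_lt hra)
      omega
    have hnotSRr : ¬ SR S lab r := by
      rintro ⟨_, _, hcond⟩
      have := hcond a haW (le_of_lt hra)
      omega
    -- assembling
    have e1 : {d | d ∈ S ∧ SA S lab d} = {d | d ∈ S' ∧ SA S' lab d} := by
      ext d
      simp only [Set.mem_setOf_eq]
      constructor
      · rintro ⟨hdS, hsa⟩
        have hdr : d ≠ r := fun hh => hlr (hh ▸ hsa.2.1)
        have hda : d ≠ a := fun hh => hnotSAa (hh ▸ hsa)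
        have hdS' : d ∈ S' := (hmemS' d).2 ⟨hdS, hdr, hda⟩
        exact ⟨hdS', (hSAiff d hdS').1 hsa⟩
      · rintro ⟨hdS', hsa⟩
        exact ⟨hsub hdS', (hSAiff d hdS').2 hsa⟩
    have e2 : {d | d ∈ S ∧ SR S lab d} = {d | d ∈ S' ∧ SR S' lab d} := by
      ext d
      simp only [Set.mem_setOf_eq]
      constructor
      · rintro ⟨hdS, hsr⟩
        have hda : d ≠ a := fun hh => (hh ▸ hsr.2.1) hla
        have hdr : d ≠ r := fun hh => hnotSRr (hh ▸ hsr)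
        have hdS' : d ∈ S' := (hmemS' d).2 ⟨hdS, hdr, hda⟩
        exact ⟨hdS', (hSRiff d hdS').1 hsr⟩
      · rintro ⟨hdS', hsr⟩
        exact ⟨hsub hdS', (hSRiff d hdS').2 hsr⟩
    have e3 : {d | d ∈ S ∧ lab d}.ncard = {d | d ∈ S' ∧ lab d}.ncard + 1 := by
      rw [hins, ncard_sep_insert hiaf hranotin, ncard_sep_insert hS'f haS',
        if_pos hla, if_neg hlr]
    have e4 : {d | d ∈ S ∧ ¬ lab d}.ncard = {d | d ∈ S' ∧ ¬ lab d}.ncard + 1 := by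
      rw [hins, ncard_sep_insert hiaf hranotin, ncard_sep_insert hS'f haS',
        if_neg (fun hh => hh hla), if_pos hlr]
    have hIH := IH S'.ncard (by omega) S' hS'f rfl
    rw [e1, e2, e3, e4]
    omega

  · -- base case : no (removable, addable) increasing pair
    push_neg at hpair
    have hSA : ∀ z ∈ S, SA S lab z ↔ lab z := by
      intro z hz
      constructor
      · exact fun h => h.2.1
      · intro hlab
        refine ⟨hz, hlab, fun c hc hcz => ?_⟩
        have hR : cR S lab c z = 0 := by
          rw [cR, Set.ncard_eq_zero (hS.subset (fun d hd => hd.1))]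
          rw [Set.eq_empty_iff_forall_notMem]
          rintro d ⟨hd, hld, hcd, hdz⟩
          rcases eq_or_lt_of_le hdz with h | h
          · exact hld (h ▸ hlab)
          · exact absurd (hpair d hd z hz hld hlab) (not_le.2 h)
        have hA : 0 < cA S lab c z := by
          rw [cA, Set.ncard_pos (hS.subset (fun d hd => hd.1))]
          exact ⟨z, hz, hlab, hcz, le_refl z⟩
        omega
    have hSR : ∀ z ∈ S, SR S lab z ↔ ¬ lab z := by
      intro z hz
      constructor
      · exact fun h => h.2.1
      · intro hlab
        refine ⟨hz, hlab, fun c hc hcz => ?_⟩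
        have hA : cA S lab z c = 0 := by
          rw [cA, Set.ncard_eq_zero (hS.subset (fun d hd => hd.1))]
          rw [Set.eq_empty_iff_forall_notMem]
          rintro d ⟨hd, hld, hzd, _⟩
          rcases eq_or_lt_of_le hzd with h | h
          · exact hlab (h ▸ hld)
          · exact absurd (hpair z hz d hd hlab hld) (not_le.2 h)
        have hR : 0 < cR S lab z c := by
          rw [cR, Set.ncard_pos (hS.subset (fun d hd => hd.1))]
          exact ⟨z, hz, hlab, le_refl z, hcz⟩
        omega
    have e1 : {d | d ∈ S ∧ SA S lab d} = {d | d ∈ S ∧ lab d} := by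
      ext d
      simp only [Set.mem_setOf_eq]
      exact ⟨fun ⟨h1, h2⟩ => ⟨h1, (hSA d h1).1 h2⟩, fun ⟨h1, h2⟩ => ⟨h1, (hSA d h1).2 h2⟩⟩
    have e2 : {d | d ∈ S ∧ SR S lab d} = {d | d ∈ S ∧ ¬ lab d} := by
      ext d
      simp only [Set.mem_setOf_eq]
      exact ⟨fun ⟨h1, h2⟩ => ⟨h1, (hSR d h1).1 h2⟩, fun ⟨h1, h2⟩ => ⟨h1, (hSR d h1).2 h2⟩⟩
    rw [e1, e2]
    omega


/-! ### Basic box lemmas -/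

lemma fin2cases (t : Fin 2) : t = 0 ∨ t = 1 := by
  fin_cases t
  · exact Or.inl rfl
  · exact Or.inr rfl

lemma not_add_and_rem (bp : Partition × Partition) (d : Box) :
    ¬ (IsAddable bp d ∧ IsRemovable bp d) := by
  rintro ⟨⟨h1, _⟩, h2, _⟩
  omega

lemma g_strict (p : Partition) {r r' : ℕ} (h : r < r') :
    (p.part r' : ℤ) - r' < (p.part r : ℤ) - r := by
  have := p.antitone r r' (le_of_lt h)
  omega

lemma content_diff {s : ℤ × ℤ} {d d' : Box} (hcomp : d.1 = d'.1)
    (hct : content s d = content s d') :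
    (d.2.2 : ℤ) - d.2.1 = (d'.2.2 : ℤ) - d'.2.1 := by
  unfold content at hct
  rw [hcomp] at hct
  exact add_right_cancel hct

lemma add_rem_content_ne (s : ℤ × ℤ) (bp : Partition × Partition) {d d' : Box}
    (ha : IsAddable bp d) (hr : IsRemovable bp d') (hcomp : d.1 = d'.1)
    (hct : content s d = content s d') : False := by
  have hceq := content_diff hcomp hct
  obtain ⟨j, r, c⟩ := d
  obtain ⟨j', r', c'⟩ := d'
  simp only at hcomp hceq
  subst hcomp
  obtain ⟨ha1, -⟩ := ha
  obtain ⟨hr1, hr2⟩ := hr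
  simp only [IsAddable, IsRemovable] at ha1 hr1 hr2
  rcases le_or_gt r r' with hle | hgt
  · have h1 : (comp bp j).part r' ≤ (comp bp j).part r := (comp bp j).antitone r r' hle
    omega
  · have h1 : (comp bp j).part r ≤ (comp bp j).part (r' + 1) :=
      (comp bp j).antitone (r' + 1) r hgt
    omega

lemma content_injOn (s : ℤ × ℤ) (bp : Partition × Partition) {d d' : Box}
    (h : IsAddable bp d ∨ IsRemovable bp d) (h' : IsAddable bp d' ∨ IsRemovable bp d')
    (hcomp : d.1 = d'.1) (hct : content s d = content s d') : d = d' := by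
  rcases h with ha | hr
  · rcases h' with ha' | hr'
    · have hceq := content_diff hcomp hct
      obtain ⟨j, r, c⟩ := d
      obtain ⟨j', r', c'⟩ := d'
      simp only at hcomp hceq
      subst hcomp
      obtain ⟨u1, -⟩ := ha
      obtain ⟨u2, -⟩ := ha'
      simp only [IsAddable] at u1 u2
      have hrr : r = r' := by
        rcases lt_trichotomy r r' with hlt | heq | hgt
        · have := g_strict (comp bp j) hlt
          omega
        · exact heq
        · have := g_strict (comp bp j) hgt
          omega
      subst hrr
      have : c = c' := by omega
      rw [this]
    · exact absurd (add_rem_content_ne s bp ha hr' hcomp hct) id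
  · rcases h' with ha' | hr'
    · exact absurd (add_rem_content_ne s bp ha' hr hcomp.symm hct.symm) id
    · have hceq := content_diff hcomp hct
      obtain ⟨j, r, c⟩ := d
      obtain ⟨j', r', c'⟩ := d'
      simp only at hcomp hceq
      subst hcomp
      obtain ⟨u1, -⟩ := hr
      obtain ⟨u2, -⟩ := hr'
      simp only [IsRemovable] at u1 u2
      have hrr : r = r' := by
        rcases lt_trichotomy r r' with hlt | heq | hgt
        · have := g_strict (comp bp j) hlt
          omega
        · exact heq
        · have := g_strict (comp bp j) hgt
          omega
      subst hrr
      have : c = c' := by omega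
      rw [this]

/-- key embedding of boxes into `ℤ`. -/
noncomputable def keyZ (s : ℤ × ℤ) (d : Box) : ℤ :=
  2 * content s d + (if d.1 = 0 then 1 else 0)

lemma keyZ_inj (s : ℤ × ℤ) (bp : Partition × Partition) {d d' : Box}
    (h : IsAddable bp d ∨ IsRemovable bp d) (h' : IsAddable bp d' ∨ IsRemovable bp d')
    (hk : keyZ s d = keyZ s d') : d = d' := by
  rcases fin2cases d.1 with h1 | h1 <;> rcases fin2cases d'.1 with h1' | h1'
  · rw [keyZ, keyZ, if_pos h1, if_pos h1'] at hk
    exact content_injOn s bp h h' (h1.trans h1'.symm) (by omega)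
  · rw [keyZ, keyZ, if_pos h1, if_neg (by rw [h1']; decide)] at hk
    omega
  · rw [keyZ, keyZ, if_neg (by rw [h1]; decide), if_pos h1'] at hk
    omega
  · rw [keyZ, keyZ, if_neg (by rw [h1]; decide), if_neg (by rw [h1']; decide)] at hk
    exact content_injOn s bp h h' (h1.trans h1'.symm) (by omega)

lemma boxLE_iff_key (s : ℤ × ℤ) (bp : Partition × Partition) {d d' : Box}
    (h : IsAddable bp d ∨ IsRemovable bp d) (h' : IsAddable bp d' ∨ IsRemovable bp d') :
    boxLE s d d' ↔ keyZ s d ≤ keyZ s d' := by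
  constructor
  · rintro (rfl | hlt | ⟨heq, f1, f2⟩)
    · exact le_refl _
    · rw [keyZ, keyZ]
      rcases fin2cases d.1 with u | u <;> rcases fin2cases d'.1 with u' | u' <;>
        simp only [u, u', if_true, if_false] <;> omega
    · rw [keyZ, keyZ, heq, if_neg (by rw [f1]; decide), if_pos f2]
      omega
  · intro hk
    rcases lt_trichotomy (content s d) (content s d') with hlt | heq | hgt
    · exact Or.inr (Or.inl hlt)
    · by_cases hc : d.1 = d'.1
      · exact Or.inl (content_injOn s bp h h' hc heq)
      · rcases fin2cases d.1 with u | u <;> rcases fin2cases d'.1 with u' | u'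
        · exact absurd (u.trans u'.symm) hc
        · exfalso
          rw [keyZ, keyZ, heq, if_pos u, if_neg (by rw [u']; decide)] at hk
          omega
        · exact Or.inr (Or.inr ⟨heq, u, u'⟩)
        · exact absurd (u.trans u'.symm) hc
    · exfalso
      rw [keyZ, keyZ] at hk
      have w1 : (if d.1 = (0 : Fin 2) then (1 : ℤ) else 0) = 0 ∨
          (if d.1 = (0 : Fin 2) then (1 : ℤ) else 0) = 1 := by split_ifs <;> simp
      have w2 : (if d'.1 = (0 : Fin 2) then (1 : ℤ) else 0) = 0 ∨
          (if d'.1 = (0 : Fin 2) then (1 : ℤ) else 0) = 1 := by split_ifs <;> simp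
      rcases w1 with w1 | w1 <;> rcases w2 with w2 | w2 <;> rw [w1, w2] at hk <;> omega

lemma boxLE_antisymm (s : ℤ × ℤ) {d d' : Box} (h1 : boxLE s d d') (h2 : boxLE s d' d) :
    d = d' := by
  rcases h1 with rfl | h1 | ⟨e1, f1, f1'⟩
  · rfl
  · rcases h2 with rfl | h2 | ⟨e2, f2, f2'⟩
    · rfl
    · omega
    · omega
  · rcases h2 with rfl | h2 | ⟨e2, f2, f2'⟩
    · rfl
    · omega
    · exact absurd (f1'.symm.trans f2) (by decide)

lemma part_bounds (p : Partition) (N : ℕ) (hN : ∀ n, N ≤ n → p.part n = 0) {r c : ℕ}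
    (h : (c = p.part r ∧ (r = 0 ∨ p.part r < p.part (r - 1))) ∨
      (c + 1 = p.part r ∧ p.part (r + 1) < p.part r)) :
    r < N + 1 ∧ c < p.part 0 + 1 := by
  have h0 : p.part r ≤ p.part 0 := p.antitone 0 r (Nat.zero_le r)
  constructor
  · by_contra hr
    push_neg at hr
    rcases h with ⟨h1, h2 | h2⟩ | ⟨h1, h2⟩
    · omega
    · have : p.part (r - 1) = 0 := hN (r - 1) (by omega)
      omega
    · have : p.part r = 0 := hN r (by omega)
      omega
  · rcases h with ⟨h1, _⟩ | ⟨h1, _⟩ <;> omega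

lemma addRem_finite (bp : Partition × Partition) :
    {d : Box | IsAddable bp d ∨ IsRemovable bp d}.Finite := by
  obtain ⟨N1, hN1⟩ := bp.1.eventually_zero
  obtain ⟨N2, hN2⟩ := bp.2.eventually_zero
  set M := N1 + N2 + bp.1.part 0 + bp.2.part 0 + 2 with hM
  apply Set.Finite.subset
    ((Set.finite_univ (α := Fin 2)).prod ((Set.finite_Iio M).prod (Set.finite_Iio M)))
  intro d hd
  have hb : d.2.1 < M ∧ d.2.2 < M := by
    rcases fin2cases d.1 with u | u
    · have hcomp : comp bp d.1 = bp.1 := by rw [comp, if_pos u]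
      rw [Set.mem_setOf_eq, IsAddable, IsRemovable, hcomp] at hd
      have := part_bounds bp.1 N1 hN1 hd
      have h0 : bp.1.part 0 ≤ bp.1.part 0 := le_refl _
      omega
    · have hcomp : comp bp d.1 = bp.2 := by
        rw [comp, if_neg (by rw [u]; decide)]
      rw [Set.mem_setOf_eq, IsAddable, IsRemovable, hcomp] at hd
      have := part_bounds bp.2 N2 hN2 hd
      omega
  exact ⟨Set.mem_univ _, hb.1, hb.2⟩

lemma iword_finite (e : ℕ) (s : ℤ × ℤ) (bp : Partition × Partition) (i : ZMod e) :
    (IWord e s bp i).Finite :=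
  (addRem_finite bp).subset (fun _ hd => hd.1)

lemma exists_good_addable (e : ℕ) (s : ℤ × ℤ) (bp : Partition × Partition) (i : ZMod e)
    (hex : ∃ d, SurvivingAddable e s bp i d) : ∃ c, IsGoodAddable e s bp i c := by
  have hSvfin : {d | SurvivingAddable e s bp i d}.Finite :=
    (addRem_finite bp).subset (fun d hd => Or.inl hd.2.1)
  obtain ⟨d0, hd0, hmax⟩ := Set.exists_max_image _ (keyZ s) hSvfin hex
  exact ⟨d0, hd0, fun b' hb' =>
    (boxLE_iff_key s bp (Or.inl hb'.2.1) (Or.inl hd0.2.1)).2 (hmax b' hb')⟩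

lemma no_surv_removable (e : ℕ) (s : ℤ × ℤ) (bp : Partition × Partition)
    (hsource : IsSlESource e s bp) : ∀ (i : ZMod e) (d : Box),
    ¬ SurvivingRemovable e s bp i d := by
  intro i d hd
  have hSvfin : {x | SurvivingRemovable e s bp i x}.Finite :=
    (addRem_finite bp).subset (fun x hx => Or.inr hx.2.1)
  obtain ⟨d0, hd0, hmin⟩ := Set.exists_min_image _ (keyZ s) hSvfin ⟨d, hd⟩
  exact hsource i d0 ⟨hd0, fun b' hb' =>
    (boxLE_iff_key s bp (Or.inr hd0.2.1) (Or.inr hb'.2.1)).2 (hmin b' hb')⟩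

/-! ### Bridge: the residue balance equation -/

theorem residue_equation (e : ℕ) (s : ℤ × ℤ) (bp : Partition × Partition) (i : ZMod e) :
    {d : Box | SurvivingAddable e s bp i d}.ncard
      + {d : Box | IsRemovable bp d ∧ ((content s d : ZMod e) = i)}.ncard
    = {d : Box | SurvivingRemovable e s bp i d}.ncard
      + {d : Box | IsAddable bp d ∧ ((content s d : ZMod e) = i)}.ncard := by
  have hWfin : (IWord e s bp i).Finite := iword_finite e s bp i
  set K := keyZ s with hK
  set SZ := K '' (IWord e s bp i) with hSZ
  have hSZfin : SZ.Finite := hWfin.image K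
  set lab : ℤ → Prop := fun z => ∃ d, d ∈ IWord e s bp i ∧ K d = z ∧ IsAddable bp d with hlab
  have hmem : ∀ d ∈ IWord e s bp i, IsAddable bp d ∨ IsRemovable bp d := fun d hd => hd.1
  have m1 : ∀ d ∈ IWord e s bp i, (lab (K d) ↔ IsAddable bp d) := by
    intro d hd
    constructor
    · rintro ⟨d', hd', hk, ha⟩
      rwa [keyZ_inj s bp (hmem d' hd') (hmem d hd) hk] at ha
    · exact fun ha => ⟨d, hd, rfl, ha⟩
  have m1' : ∀ d ∈ IWord e s bp i, (¬ lab (K d) ↔ IsRemovable bp d) := by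
    intro d hd
    rw [m1 d hd]
    constructor
    · intro h
      rcases hd.1 with ha | hr
      · exact absurd ha h
      · exact hr
    · exact fun hr ha => not_add_and_rem bp d ⟨ha, hr⟩
  have hinj : ∀ d1 ∈ IWord e s bp i, ∀ d2 ∈ IWord e s bp i, K d1 = K d2 → d1 = d2 :=
    fun d1 h1 d2 h2 hk => keyZ_inj s bp (hmem d1 h1) (hmem d2 h2) hk
  have himg : ∀ (P : Box → Prop) (Q : ℤ → Prop), (∀ d ∈ IWord e s bp i, (P d ↔ Q (K d))) →
      ∀ b c : Box, b ∈ IWord e s bp i → c ∈ IWord e s bp i →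
      {d | d ∈ IWord e s bp i ∧ P d ∧ boxLE s c d ∧ boxLE s d b}.ncard
        = {z | z ∈ SZ ∧ Q z ∧ K c ≤ z ∧ z ≤ K b}.ncard := by
    intro P Q hPQ b c hb hc
    have hset : K '' {d | d ∈ IWord e s bp i ∧ P d ∧ boxLE s c d ∧ boxLE s d b}
        = {z | z ∈ SZ ∧ Q z ∧ K c ≤ z ∧ z ≤ K b} := by
      ext z
      constructor
      · rintro ⟨d, ⟨hdW, hPd, h1, h2⟩, rfl⟩
        exact ⟨⟨d, hdW, rfl⟩, (hPQ d hdW).1 hPd,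
          (boxLE_iff_key s bp (hmem c hc) (hmem d hdW)).1 h1,
          (boxLE_iff_key s bp (hmem d hdW) (hmem b hb)).1 h2⟩
      · rintro ⟨⟨d, hdW, rfl⟩, hQ, h1, h2⟩
        exact ⟨d, ⟨hdW, (hPQ d hdW).2 hQ,
          (boxLE_iff_key s bp (hmem c hc) (hmem d hdW)).2 h1,
          (boxLE_iff_key s bp (hmem d hdW) (hmem b hb)).2 h2⟩, rfl⟩
    rw [← hset, Set.ncard_image_of_injOn (fun d1 hd1 d2 hd2 hk => hinj d1 hd1.1 d2 hd2.1 hk)]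
  have hwinA : ∀ b c : Box, b ∈ IWord e s bp i → c ∈ IWord e s bp i →
      {d | d ∈ IWord e s bp i ∧ IsAddable bp d ∧ boxLE s c d ∧ boxLE s d b}.ncard
        = cA SZ lab (K c) (K b) := fun b c hb hc => himg _ lab (fun d hd => (m1 d hd).symm) b c hb hc
  have hwinR : ∀ b c : Box, b ∈ IWord e s bp i → c ∈ IWord e s bp i →
      {d | d ∈ IWord e s bp i ∧ IsRemovable bp d ∧ boxLE s c d ∧ boxLE s d b}.ncard
        = cR SZ lab (K c) (K b) := fun b c hb hc => himg _ (fun z => ¬ lab z) (fun d hd => (m1' d hd).symm) b c hb hc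
  have m3 : ∀ d ∈ IWord e s bp i, IsAddable bp d →
      (SurvivingAddable e s bp i d ↔ SA SZ lab (K d)) := by
    intro d hd hA
    constructor
    · rintro ⟨hdW, hA', hcond⟩
      refine ⟨⟨d, hd, rfl⟩, (m1 d hd).2 hA, ?_⟩
      rintro z ⟨c, hcW, rfl⟩ hz
      have hble : boxLE s c d := (boxLE_iff_key s bp (hmem c hcW) (hmem d hd)).2 hz
      have hc := hcond c hcW hble
      rwa [hwinA d c hd hcW, hwinR d c hd hcW] at hc
    · rintro ⟨_, _, hcond⟩
      refine ⟨hd, hA, ?_⟩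
      intro c hcW hble
      have hc := hcond (K c) ⟨c, hcW, rfl⟩
        ((boxLE_iff_key s bp (hmem c hcW) (hmem d hd)).1 hble)
      rwa [← hwinA d c hd hcW, ← hwinR d c hd hcW] at hc
  have m3' : ∀ d ∈ IWord e s bp i, IsRemovable bp d →
      (SurvivingRemovable e s bp i d ↔ SR SZ lab (K d)) := by
    intro d hd hR
    constructor
    · rintro ⟨hdW, hR', hcond⟩
      refine ⟨⟨d, hd, rfl⟩, (m1' d hd).2 hR, ?_⟩
      rintro z ⟨c, hcW, rfl⟩ hz
      have hble : boxLE s d c := (boxLE_iff_key s bp (hmem d hd) (hmem c hcW)).2 hz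
      have hc := hcond c hcW hble
      rwa [hwinA c d hcW hd, hwinR c d hcW hd] at hc
    · rintro ⟨_, _, hcond⟩
      refine ⟨hd, hR, ?_⟩
      intro c hcW hble
      have hc := hcond (K c) ⟨c, hcW, rfl⟩
        ((boxLE_iff_key s bp (hmem d hd) (hmem c hcW)).1 hble)
      rwa [← hwinA c d hcW hd, ← hwinR c d hcW hd] at hc
  have hcntA : {d : Box | IsAddable bp d ∧ ((content s d : ZMod e) = i)}.ncard
      = {z | z ∈ SZ ∧ lab z}.ncard := by
    have hsub : {d : Box | IsAddable bp d ∧ ((content s d : ZMod e) = i)} ⊆ IWord e s bp i :=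
      fun d hd => ⟨Or.inl hd.1, hd.2⟩
    have hset : K '' {d : Box | IsAddable bp d ∧ ((content s d : ZMod e) = i)}
        = {z | z ∈ SZ ∧ lab z} := by
      ext z
      constructor
      · rintro ⟨d, ⟨hA, hres⟩, rfl⟩
        exact ⟨⟨d, ⟨Or.inl hA, hres⟩, rfl⟩, (m1 d ⟨Or.inl hA, hres⟩).2 hA⟩
      · rintro ⟨⟨d, hdW, rfl⟩, hl⟩
        exact ⟨d, ⟨(m1 d hdW).1 hl, hdW.2⟩, rfl⟩
    rw [← hset, Set.ncard_image_of_injOn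
      (fun d1 hd1 d2 hd2 hk => hinj d1 (hsub hd1) d2 (hsub hd2) hk)]
  have hcntR : {d : Box | IsRemovable bp d ∧ ((content s d : ZMod e) = i)}.ncard
      = {z | z ∈ SZ ∧ ¬ lab z}.ncard := by
    have hsub : {d : Box | IsRemovable bp d ∧ ((content s d : ZMod e) = i)} ⊆ IWord e s bp i :=
      fun d hd => ⟨Or.inr hd.1, hd.2⟩
    have hset : K '' {d : Box | IsRemovable bp d ∧ ((content s d : ZMod e) = i)}
        = {z | z ∈ SZ ∧ ¬ lab z} := by
      ext z
      constructor
      · rintro ⟨d, ⟨hR, hres⟩, rfl⟩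
        exact ⟨⟨d, ⟨Or.inr hR, hres⟩, rfl⟩, (m1' d ⟨Or.inr hR, hres⟩).2 hR⟩
      · rintro ⟨⟨d, hdW, rfl⟩, hl⟩
        exact ⟨d, ⟨(m1' d hdW).1 hl, hdW.2⟩, rfl⟩
    rw [← hset, Set.ncard_image_of_injOn
      (fun d1 hd1 d2 hd2 hk => hinj d1 (hsub hd1) d2 (hsub hd2) hk)]
  have hcntSA : {d : Box | SurvivingAddable e s bp i d}.ncard
      = {z | z ∈ SZ ∧ SA SZ lab z}.ncard := by
    have hsub : {d : Box | SurvivingAddable e s bp i d} ⊆ IWord e s bp i := fun d hd => hd.1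
    have hset : K '' {d : Box | SurvivingAddable e s bp i d} = {z | z ∈ SZ ∧ SA SZ lab z} := by
      ext z
      constructor
      · rintro ⟨d, hd, rfl⟩
        exact ⟨⟨d, hd.1, rfl⟩, (m3 d hd.1 hd.2.1).1 hd⟩
      · rintro ⟨⟨d, hdW, rfl⟩, hsa⟩
        exact ⟨d, (m3 d hdW ((m1 d hdW).1 hsa.2.1)).2 hsa, rfl⟩
    rw [← hset, Set.ncard_image_of_injOn
      (fun d1 hd1 d2 hd2 hk => hinj d1 (hsub hd1) d2 (hsub hd2) hk)]
  have hcntSR : {d : Box | SurvivingRemovable e s bp i d}.ncard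
      = {z | z ∈ SZ ∧ SR SZ lab z}.ncard := by
    have hsub : {d : Box | SurvivingRemovable e s bp i d} ⊆ IWord e s bp i := fun d hd => hd.1
    have hset : K '' {d : Box | SurvivingRemovable e s bp i d}
        = {z | z ∈ SZ ∧ SR SZ lab z} := by
      ext z
      constructor
      · rintro ⟨d, hd, rfl⟩
        exact ⟨⟨d, hd.1, rfl⟩, (m3' d hd.1 hd.2.1).1 hd⟩
      · rintro ⟨⟨d, hdW, rfl⟩, hsr⟩
        exact ⟨d, (m3' d hdW ((m1' d hdW).1 hsr.2.1)).2 hsr, rfl⟩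
    rw [← hset, Set.ncard_image_of_injOn
      (fun d1 hd1 d2 hd2 hk => hinj d1 (hsub hd1) d2 (hsub hd2) hk)]
  rw [hcntA, hcntR, hcntSA, hcntSR]
  exact word_main SZ hSZfin lab

/-! ### Global count: two more addable than removable boxes -/

lemma comp_zero (bp : Partition × Partition) : comp bp 0 = bp.1 := by simp [comp]

lemma comp_one (bp : Partition × Partition) : comp bp 1 = bp.2 := by simp [comp]

lemma add_rem_global (bp : Partition × Partition) :
    {d : Box | IsAddable bp d}.ncard = {d : Box | IsRemovable bp d}.ncard + 2 := by
  have hAfin : {d : Box | IsAddable bp d}.Finite :=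
    (addRem_finite bp).subset (fun d hd => Or.inl hd)
  have hRfin : {d : Box | IsRemovable bp d}.Finite :=
    (addRem_finite bp).subset (fun d hd => Or.inr hd)
  set f : Box → Box := fun d => (d.1, d.2.1 + 1, (comp bp d.1).part (d.2.1 + 1)) with hf
  have himg : f '' {d : Box | IsRemovable bp d} = {d : Box | IsAddable bp d ∧ d.2.1 ≠ 0} := by
    ext d
    constructor
    · rintro ⟨⟨j, r, c⟩, ⟨h1, h2⟩, rfl⟩
      refine ⟨⟨rfl, Or.inr ?_⟩, by simp⟩
      simpa [hf] using h2
    · rintro ⟨⟨h1, h2⟩, h3⟩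
      obtain ⟨j, r, c⟩ := d
      simp only at h3 h1 h2
      obtain ⟨m, rfl⟩ := Nat.exists_eq_succ_of_ne_zero h3
      have hlt : (comp bp j).part (m + 1) < (comp bp j).part m := by
        rcases h2 with h2 | h2
        · omega
        · simpa using h2
      refine ⟨(j, m, (comp bp j).part m - 1), ⟨?_, ?_⟩, ?_⟩
      · show (comp bp j).part m - 1 + 1 = (comp bp j).part m
        omega
      · show (comp bp j).part (m + 1) < (comp bp j).part m
        exact hlt
      · show (j, m + 1, (comp bp j).part (m + 1)) = (j, m + 1, c)
        rw [h1]
  have hinj : Set.InjOn f {d : Box | IsRemovable bp d} := by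
    rintro ⟨j1, r1, c1⟩ hm1 ⟨j2, r2, c2⟩ hm2 heq
    simp only [hf, Prod.mk.injEq] at heq
    obtain ⟨u1, u2, u3⟩ := heq
    obtain ⟨v1, -⟩ := hm1
    obtain ⟨v2, -⟩ := hm2
    simp only at v1 v2
    subst u1
    have : r1 = r2 := by omega
    subst this
    have : c1 = c2 := by omega
    rw [this]
  have hzero : {d : Box | IsAddable bp d ∧ d.2.1 = 0}
      = {((0 : Fin 2), 0, bp.1.part 0), ((1 : Fin 2), 0, bp.2.part 0)} := by
    ext ⟨j, r, c⟩
    simp only [Set.mem_setOf_eq, Set.mem_insert_iff, Set.mem_singleton_iff, Prod.mk.injEq]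
    constructor
    · rintro ⟨⟨h1, h2⟩, rfl⟩
      simp only at h1
      rcases fin2cases j with rfl | rfl
      · exact Or.inl ⟨rfl, rfl, by rw [h1, comp_zero]⟩
      · exact Or.inr ⟨rfl, rfl, by rw [h1, comp_one]⟩
    · rintro (⟨rfl, rfl, rfl⟩ | ⟨rfl, rfl, rfl⟩)
      · exact ⟨⟨by rw [comp_zero], Or.inl rfl⟩, rfl⟩
      · exact ⟨⟨by rw [comp_one], Or.inl rfl⟩, rfl⟩
  have hsplitA : {d : Box | IsAddable bp d}
      = {d : Box | IsAddable bp d ∧ d.2.1 ≠ 0} ∪ {d : Box | IsAddable bp d ∧ d.2.1 = 0} := by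
    ext d
    simp only [Set.mem_setOf_eq, Set.mem_union]
    tauto
  have hdisj : Disjoint {d : Box | IsAddable bp d ∧ d.2.1 ≠ 0}
      {d : Box | IsAddable bp d ∧ d.2.1 = 0} := by
    rw [Set.disjoint_left]
    rintro d ⟨-, h1⟩ ⟨-, h2⟩
    exact h1 h2
  have hpairne : ((0 : Fin 2), (0 : ℕ), bp.1.part 0) ≠ ((1 : Fin 2), (0 : ℕ), bp.2.part 0) := by
    simp
  have hcard2 : {d : Box | IsAddable bp d ∧ d.2.1 = 0}.ncard = 2 := by
    rw [hzero, Set.ncard_pair hpairne]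
  rw [hsplitA, Set.ncard_union_eq hdisj
    (hAfin.subset (fun d hd => hd.1)) (hAfin.subset (fun d hd => hd.1)),
    hcard2, ← himg, Set.ncard_image_of_injOn hinj]

/-! ### Fiberwise count over residues -/

lemma fiber_sum (e : ℕ) [NeZero e] (s : ℤ × ℤ) (P : Box → Prop)
    (hfin : {d : Box | P d}.Finite) :
    {d : Box | P d}.ncard
      = ∑ i : ZMod e, {d : Box | P d ∧ ((content s d : ZMod e) = i)}.ncard := by
  classical
  have h1 : {d : Box | P d}.ncard = hfin.toFinset.card := by
    rw [← Set.ncard_coe_finset hfin.toFinset, Set.Finite.coe_toFinset]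
  have h2 : hfin.toFinset.card = ∑ i : ZMod e,
      (hfin.toFinset.filter fun d => ((content s d : ZMod e) = i)).card :=
    Finset.card_eq_sum_card_fiberwise (fun d _ => Finset.mem_univ _)
  have h3 : ∀ i : ZMod e, (hfin.toFinset.filter fun d => ((content s d : ZMod e) = i)).card
      = {d : Box | P d ∧ ((content s d : ZMod e) = i)}.ncard := by
    intro i
    rw [← Set.ncard_coe_finset]
    congr 1
    ext d
    simp [Set.Finite.mem_toFinset]
  rw [h1, h2]
  exact Finset.sum_congr rfl (fun i _ => h3 i)

/-! ### Effect of adding a box on addable/removable boxes -/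

lemma addbox_part' {bp bp' : Partition × Partition} {b : Box} (hbp' : AddBox bp b bp') :
    (comp bp' b.1).part
      = Function.update ((comp bp b.1).part) b.2.1 ((comp bp b.1).part b.2.1 + 1) := by
  unfold AddBox at hbp'
  rcases fin2cases b.1 with u | u
  · rw [if_pos u] at hbp'
    rw [u, comp_zero, comp_zero]
    exact hbp'.2
  · rw [if_neg (by rw [u]; decide)] at hbp'
    rw [u, comp_one, comp_one]
    exact hbp'.2

lemma addbox_comp_other {bp bp' : Partition × Partition} {b : Box} (hbp' : AddBox bp b bp') :
    ∀ j : Fin 2, j ≠ b.1 → comp bp' j = comp bp j := by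
  intro j hj
  unfold AddBox at hbp'
  rcases fin2cases b.1 with u | u
  · rw [if_pos u] at hbp'
    rcases fin2cases j with v | v
    · exact absurd (v.trans u.symm) hj
    · rw [v, comp_one, comp_one]
      exact hbp'.1
  · rw [if_neg (by rw [u]; decide)] at hbp'
    rcases fin2cases j with v | v
    · rw [v, comp_zero, comp_zero]
      exact hbp'.1
    · exact absurd (v.trans u.symm) hj

section AddBoxStatus

variable {bp bp' : Partition × Partition} {b : Box}

lemma part'_at (hadd : IsAddable bp b) (hbp' : AddBox bp b bp') :
    (comp bp' b.1).part b.2.1 = b.2.2 + 1 := by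
  rw [addbox_part' hbp', Function.update_self, ← hadd.1]

lemma part'_ne (hbp' : AddBox bp b bp') {t : ℕ} (ht : t ≠ b.2.1) :
    (comp bp' b.1).part t = (comp bp b.1).part t := by
  rw [addbox_part' hbp', Function.update_of_ne ht]

lemma st_other (hbp' : AddBox bp b bp') {d : Box} (hd : d.1 ≠ b.1) :
    (IsAddable bp' d ↔ IsAddable bp d) ∧ (IsRemovable bp' d ↔ IsRemovable bp d) := by
  have hc := addbox_comp_other hbp' d.1 hd
  unfold IsAddable IsRemovable
  rw [hc]
  exact ⟨Iff.rfl, Iff.rfl⟩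

lemma st_add_far (hbp' : AddBox bp b bp') {d : Box} (hd1 : d.1 = b.1) (hr1 : d.2.1 ≠ b.2.1)
    (hr2 : d.2.1 ≠ b.2.1 + 1) : IsAddable bp' d ↔ IsAddable bp d := by
  unfold IsAddable
  rw [hd1, part'_ne hbp' hr1]
  rcases Nat.eq_zero_or_pos d.2.1 with h0 | h0
  · simp only [h0]
    tauto
  · have : d.2.1 - 1 ≠ b.2.1 := by omega
    rw [part'_ne hbp' this]

lemma st_rem_far (hbp' : AddBox bp b bp') {d : Box} (hd1 : d.1 = b.1) (hr1 : d.2.1 ≠ b.2.1)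
    (hr2 : d.2.1 + 1 ≠ b.2.1) : IsRemovable bp' d ↔ IsRemovable bp d := by
  unfold IsRemovable
  rw [hd1, part'_ne hbp' hr1, part'_ne hbp' hr2]

lemma st_add_x (hadd : IsAddable bp b) (hbp' : AddBox bp b bp') (c : ℕ) : IsAddable bp' (b.1, b.2.1, c)
    ↔ (c = b.2.2 + 1 ∧ (b.2.1 = 0 ∨ b.2.2 + 1 < (comp bp b.1).part (b.2.1 - 1))) := by
  unfold IsAddable
  simp only
  rw [part'_at hadd hbp']
  rcases Nat.eq_zero_or_pos b.2.1 with h0 | h0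
  · simp only [h0]
    tauto
  · have hne : b.2.1 - 1 ≠ b.2.1 := by omega
    rw [part'_ne hbp' hne]

lemma part_x1_le (hadd : IsAddable bp b) : (comp bp b.1).part (b.2.1 + 1) ≤ b.2.2 := by
  have := (comp bp b.1).antitone b.2.1 (b.2.1 + 1) (by omega)
  rw [← hadd.1] at this
  exact this

lemma st_rem_x (hadd : IsAddable bp b) (hbp' : AddBox bp b bp') (c : ℕ) : IsRemovable bp' (b.1, b.2.1, c) ↔ c = b.2.2 := by
  unfold IsRemovable
  simp only
  rw [part'_at hadd hbp', part'_ne hbp' (by omega : b.2.1 + 1 ≠ b.2.1)]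
  have := part_x1_le hadd
  constructor
  · rintro ⟨h1, -⟩
    omega
  · intro h1
    exact ⟨by omega, by omega⟩

lemma st_add_x1 (hadd : IsAddable bp b) (hbp' : AddBox bp b bp') (c : ℕ) :
    IsAddable bp' (b.1, b.2.1 + 1, c) ↔ c = (comp bp b.1).part (b.2.1 + 1) := by
  unfold IsAddable
  simp only
  rw [part'_ne hbp' (by omega : b.2.1 + 1 ≠ b.2.1),
    (by omega : b.2.1 + 1 - 1 = b.2.1), part'_at hadd hbp']
  have := part_x1_le hadd
  constructor
  · rintro ⟨h1, -⟩
    exact h1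
  · intro h1
    exact ⟨h1, Or.inr (by omega)⟩

lemma st_rem_x1' (hadd : IsAddable bp b) (hbp' : AddBox bp b bp') (hx1 : 1 ≤ b.2.1) (c : ℕ) :
    IsRemovable bp' (b.1, b.2.1 - 1, c)
      ↔ (c + 1 = (comp bp b.1).part (b.2.1 - 1)
          ∧ b.2.2 + 1 < (comp bp b.1).part (b.2.1 - 1)) := by
  unfold IsRemovable
  simp only
  rw [(by omega : b.2.1 - 1 + 1 = b.2.1), part'_ne hbp' (by omega : b.2.1 - 1 ≠ b.2.1),
    part'_at hadd hbp']

lemma st_add_x_bp (hadd : IsAddable bp b) (c : ℕ) : IsAddable bp (b.1, b.2.1, c) ↔ c = b.2.2 := by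
  unfold IsAddable
  simp only
  constructor
  · rintro ⟨h1, -⟩
    rw [h1, ← hadd.1]
  · intro h1
    exact ⟨by rw [h1]; exact hadd.1, hadd.2⟩

lemma st_rem_x_bp (hadd : IsAddable bp b) (c : ℕ) : IsRemovable bp (b.1, b.2.1, c)
    ↔ (c + 1 = b.2.2 ∧ (comp bp b.1).part (b.2.1 + 1) < b.2.2) := by
  unfold IsRemovable
  simp only
  rw [← hadd.1]

lemma st_add_x1_bp (hadd : IsAddable bp b) (c : ℕ) : IsAddable bp (b.1, b.2.1 + 1, c)
    ↔ (c = (comp bp b.1).part (b.2.1 + 1) ∧ (comp bp b.1).part (b.2.1 + 1) < b.2.2) := by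
  unfold IsAddable
  simp only
  rw [(by omega : b.2.1 + 1 - 1 = b.2.1), ← hadd.1]
  constructor
  · rintro ⟨h1, h2 | h2⟩
    · omega
    · exact ⟨h1, by omega⟩
  · rintro ⟨h1, h2⟩
    exact ⟨h1, Or.inr (by omega)⟩

lemma st_rem_x1'_bp (hadd : IsAddable bp b) (hx1 : 1 ≤ b.2.1) (c : ℕ) :
    IsRemovable bp (b.1, b.2.1 - 1, c) ↔ c + 1 = (comp bp b.1).part (b.2.1 - 1) := by
  unfold IsRemovable
  simp only
  rw [(by omega : b.2.1 - 1 + 1 = b.2.1)]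
  have hx := hadd.2
  rcases hx with hx | hx
  · omega
  · rw [← hadd.1] at hx
    constructor
    · rintro ⟨h1, -⟩
      exact h1
    · intro h1
      refine ⟨h1, ?_⟩
      rw [← hadd.1]
      exact hx

end AddBoxStatus

/-- If `|λ, s⟩` is a source vertex of the `ŝl_e`-crystal with exactly
one good addable box `b` (over all residues), of residue `i`, then after adding `b` the
resulting charged bipartition has a good addable `i`-box and a good addable `(i-1)`-box;
in particular good addable boxes of two distinct residues. -/
theorem add_unique_good_box_two_residues
    (e : ℕ) (he : 2 ≤ e) (s : ℤ × ℤ) (bp : Partition × Partition)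
    (hsource : IsSlESource e s bp)
    (i : ZMod e) (b : Box) (hgood : IsGoodAddable e s bp i b)
    (huniq : ∀ (i' : ZMod e) (b' : Box), IsGoodAddable e s bp i' b' → i' = i ∧ b' = b)
    (bp' : Partition × Partition) (hbp' : AddBox bp b bp') :
    (∃ c : Box, IsGoodAddable e s bp' i c) ∧
    (∃ c : Box, IsGoodAddable e s bp' (i - 1) c) ∧
    i ≠ i - 1 := by
  classical
  haveI : NeZero e := ⟨by omega⟩
  haveI : Fact (1 < e) := ⟨he⟩
  have hone : (1 : ZMod e) ≠ 0 := one_ne_zero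
  have hii : i ≠ i - 1 := by
    intro h
    exact hone (sub_eq_self.mp h.symm)
  have him1 : (i - 1 : ZMod e) ≠ i := fun h => hii h.symm
  -- basic facts about b
  have hbW : b ∈ IWord e s bp i := hgood.1.1
  have hbadd : IsAddable bp b := hgood.1.2.1
  have hires : (content s b : ZMod e) = i := hbW.2
  -- residue steps
  have hstep : ∀ d : Box, (content s d : ZMod e) = i → content s d = content s b + 1 → False := by
    intro d hres h1
    have hcast : ((content s d : ℤ) : ZMod e) = ((content s b + 1 : ℤ) : ZMod e) := by rw [h1]
    push_cast at hcast
    rw [hres, hires] at hcast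
    exact hone (left_eq_add.mp hcast)
  have hstep' : ∀ d : Box, (content s d : ZMod e) = i → content s b = content s d + 1 → False := by
    intro d hres h1
    have hcast : ((content s b : ℤ) : ZMod e) = ((content s d + 1 : ℤ) : ZMod e) := by rw [h1]
    push_cast at hcast
    rw [hres, hires] at hcast
    exact hone (left_eq_add.mp hcast)
  -- no surviving removable boxes, no surviving addable boxes off residue i
  have hnoSR : ∀ (i' : ZMod e) (d : Box), ¬ SurvivingRemovable e s bp i' d :=
    no_surv_removable e s bp hsource
  have hnoSA : ∀ (i' : ZMod e), i' ≠ i → ∀ d : Box, ¬ SurvivingAddable e s bp i' d := by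
    intro i' hne d hd
    obtain ⟨c, hc⟩ := exists_good_addable e s bp i' ⟨d, hd⟩
    exact hne (huniq i' c hc).1
  -- count balance off residue i
  have hbal : ∀ i' : ZMod e, i' ≠ i →
      {d : Box | IsAddable bp d ∧ ((content s d : ZMod e) = i')}.ncard
        = {d : Box | IsRemovable bp d ∧ ((content s d : ZMod e) = i')}.ncard := by
    intro i' hne
    have heq := residue_equation e s bp i'
    have h1 : {d : Box | SurvivingAddable e s bp i' d} = ∅ := by
      rw [Set.eq_empty_iff_forall_notMem]
      exact hnoSA i' hne
    have h2 : {d : Box | SurvivingRemovable e s bp i' d} = ∅ := by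
      rw [Set.eq_empty_iff_forall_notMem]
      exact fun d => hnoSR i' d
    rw [h1, h2, Set.ncard_empty] at heq
    omega
  -- residue i count
  have hAfin : {d : Box | IsAddable bp d}.Finite :=
    (addRem_finite bp).subset (fun d hd => Or.inl hd)
  have hRfin : {d : Box | IsRemovable bp d}.Finite :=
    (addRem_finite bp).subset (fun d hd => Or.inr hd)
  have hAi : {d : Box | IsAddable bp d ∧ ((content s d : ZMod e) = i)}.ncard
      = {d : Box | IsRemovable bp d ∧ ((content s d : ZMod e) = i)}.ncard + 2 := by
    have hsumA : {d : Box | IsAddable bp d}.ncard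
        = ∑ x : ZMod e, {d : Box | IsAddable bp d ∧ ((content s d : ZMod e) = x)}.ncard :=
      fiber_sum e s _ hAfin
    have hsumR : {d : Box | IsRemovable bp d}.ncard
        = ∑ x : ZMod e, {d : Box | IsRemovable bp d ∧ ((content s d : ZMod e) = x)}.ncard :=
      fiber_sum e s _ hRfin
    have hglob := add_rem_global bp
    have hsplitA : {d : Box | IsAddable bp d ∧ ((content s d : ZMod e) = i)}.ncard
          + ∑ x ∈ Finset.univ.erase i,
            {d : Box | IsAddable bp d ∧ ((content s d : ZMod e) = x)}.ncard
        = ∑ x : ZMod e, {d : Box | IsAddable bp d ∧ ((content s d : ZMod e) = x)}.ncard :=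
      Finset.add_sum_erase _
        (fun x : ZMod e => {d : Box | IsAddable bp d ∧ ((content s d : ZMod e) = x)}.ncard)
        (Finset.mem_univ i)
    have hsplitR : {d : Box | IsRemovable bp d ∧ ((content s d : ZMod e) = i)}.ncard
          + ∑ x ∈ Finset.univ.erase i,
            {d : Box | IsRemovable bp d ∧ ((content s d : ZMod e) = x)}.ncard
        = ∑ x : ZMod e, {d : Box | IsRemovable bp d ∧ ((content s d : ZMod e) = x)}.ncard :=
      Finset.add_sum_erase _
        (fun x : ZMod e => {d : Box | IsRemovable bp d ∧ ((content s d : ZMod e) = x)}.ncard)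
        (Finset.mem_univ i)
    have hrest : ∑ x ∈ Finset.univ.erase i,
          {d : Box | IsAddable bp d ∧ ((content s d : ZMod e) = x)}.ncard
        = ∑ x ∈ Finset.univ.erase i,
          {d : Box | IsRemovable bp d ∧ ((content s d : ZMod e) = x)}.ncard :=
      Finset.sum_congr rfl (fun x hx => hbal x (Finset.ne_of_mem_erase hx))
    rw [hsumA, hsumR] at hglob
    omega
  -- two surviving addable boxes at residue i
  have hsurv2 : {d : Box | SurvivingAddable e s bp i d}.ncard = 2 := by
    have heq := residue_equation e s bp i
    have h2 : {d : Box | SurvivingRemovable e s bp i d} = ∅ := by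
      rw [Set.eq_empty_iff_forall_notMem]
      exact fun d => hnoSR i d
    rw [h2, Set.ncard_empty, hAi] at heq
    omega
  obtain ⟨a, ha, hab⟩ : ∃ a ∈ {d : Box | SurvivingAddable e s bp i d}, a ≠ b := by
    apply Set.exists_ne_of_one_lt_ncard
    · rw [hsurv2]
      omega
  have ha : SurvivingAddable e s bp i a := ha
  -- statuses of boxes different from b, of residue i, are unchanged
  have hstat : ∀ d : Box, d ≠ b → ((content s d : ZMod e) = i) →
      ((IsAddable bp' d ↔ IsAddable bp d) ∧ (IsRemovable bp' d ↔ IsRemovable bp d)) := by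
    rintro ⟨j, r, c⟩ hdb hdres
    by_cases hc : j = b.1
    · subst hc
      by_cases hr1 : r = b.2.1
      · subst hr1
        constructor
        · rw [st_add_x hbadd hbp', st_add_x_bp hbadd]
          constructor
          · rintro ⟨h1, -⟩
            exfalso
            refine hstep (b.1, b.2.1, c) hdres ?_
            simp only [content]
            omega
          · intro h1
            exfalso
            exact hdb (by rw [h1])
        · rw [st_rem_x hbadd hbp', st_rem_x_bp hbadd]
          constructor
          · intro h1
            exfalso
            exact hdb (by rw [h1])
          · rintro ⟨h1, -⟩
            exfalso
            refine hstep' (b.1, b.2.1, c) hdres ?_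
            simp only [content]
            omega
      · by_cases hr2 : r = b.2.1 + 1
        · subst hr2
          constructor
          · rw [st_add_x1 hbadd hbp', st_add_x1_bp hbadd]
            constructor
            · intro h1
              refine ⟨h1, ?_⟩
              rcases lt_or_eq_of_le (part_x1_le hbadd) with h2 | h2
              · exact h2
              · exfalso
                refine hstep' (b.1, b.2.1 + 1, c) hdres ?_
                simp only [content]
                omega
            · rintro ⟨h1, -⟩
              exact h1
          · exact st_rem_far hbp' rfl (show b.2.1 + 1 ≠ b.2.1 by omega) (show b.2.1 + 1 + 1 ≠ b.2.1 by omega)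
        · by_cases hr3 : r + 1 = b.2.1
          · have hx1 : 1 ≤ b.2.1 := by omega
            have hrr : r = b.2.1 - 1 := by omega
            subst hrr
            constructor
            · exact st_add_far hbp' rfl (show b.2.1 - 1 ≠ b.2.1 by omega) (show b.2.1 - 1 ≠ b.2.1 + 1 by omega)
            · rw [st_rem_x1' hbadd hbp' hx1, st_rem_x1'_bp hbadd hx1]
              constructor
              · rintro ⟨h1, -⟩
                exact h1
              · intro h1
                refine ⟨h1, ?_⟩
                have hgt : b.2.2 < (comp bp b.1).part (b.2.1 - 1) := by
                  rcases hbadd.2 with h2 | h2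
                  · omega
                  · rw [← hbadd.1] at h2
                    exact h2
                rcases lt_or_eq_of_le (by omega : b.2.2 + 1 ≤ (comp bp b.1).part (b.2.1 - 1))
                  with h2 | h2
                · exact h2
                · exfalso
                  refine hstep (b.1, b.2.1 - 1, c) hdres ?_
                  simp only [content]
                  omega
          · exact ⟨st_add_far hbp' rfl (show r ≠ b.2.1 by omega) (show r ≠ b.2.1 + 1 by omega),
              st_rem_far hbp' rfl (show r ≠ b.2.1 by omega) (show r + 1 ≠ b.2.1 by omega)⟩
    · exact st_other hbp' hc
  -- the i-words coincide
  have hbrem' : IsRemovable bp' b := (st_rem_x hbadd hbp' b.2.2).2 rfl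
  have hword : IWord e s bp' i = IWord e s bp i := by
    ext d
    by_cases hd : d = b
    · subst hd
      exact iff_of_true ⟨Or.inr hbrem', hires⟩ ⟨Or.inl hbadd, hires⟩
    · constructor
      · rintro ⟨h1, h2⟩
        obtain ⟨hst1, hst2⟩ := hstat d hd h2
        rcases h1 with h1 | h1
        · exact ⟨Or.inl (hst1.1 h1), h2⟩
        · exact ⟨Or.inr (hst2.1 h1), h2⟩
      · rintro ⟨h1, h2⟩
        obtain ⟨hst1, hst2⟩ := hstat d hd h2
        rcases h1 with h1 | h1
        · exact ⟨Or.inl (hst1.2 h1), h2⟩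
        · exact ⟨Or.inr (hst2.2 h1), h2⟩
  -- a survives in bp'
  have haleb : boxLE s a b := hgood.2 a ha
  have hnotblea : ¬ boxLE s b a := fun h => hab (boxLE_antisymm s haleb h)
  have hsurv' : SurvivingAddable e s bp' i a := by
    have haW : a ∈ IWord e s bp i := ha.1
    have hares : (content s a : ZMod e) = i := haW.2
    have haadd' : IsAddable bp' a := (hstat a hab hares).1.mpr ha.2.1
    refine ⟨by rw [hword]; exact haW, haadd', ?_⟩
    intro c hcW' hca
    have hcW : c ∈ IWord e s bp i := by rwa [hword] at hcW'
    have hcond := ha.2.2 c hcW hca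
    have hwinA : {d : Box | d ∈ IWord e s bp' i ∧ IsAddable bp' d ∧ boxLE s c d ∧ boxLE s d a}
        = {d : Box | d ∈ IWord e s bp i ∧ IsAddable bp d ∧ boxLE s c d ∧ boxLE s d a} := by
      ext d
      simp only [Set.mem_setOf_eq, hword]
      constructor
      · rintro ⟨h1, h2, h3, h4⟩
        have hdb : d ≠ b := fun hh => hnotblea (hh ▸ h4)
        exact ⟨h1, ((hstat d hdb h1.2).1).1 h2, h3, h4⟩
      · rintro ⟨h1, h2, h3, h4⟩
        have hdb : d ≠ b := fun hh => hnotblea (hh ▸ h4)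
        exact ⟨h1, ((hstat d hdb h1.2).1).2 h2, h3, h4⟩
    have hwinR : {d : Box | d ∈ IWord e s bp' i ∧ IsRemovable bp' d ∧ boxLE s c d ∧ boxLE s d a}
        = {d : Box | d ∈ IWord e s bp i ∧ IsRemovable bp d ∧ boxLE s c d ∧ boxLE s d a} := by
      ext d
      simp only [Set.mem_setOf_eq, hword]
      constructor
      · rintro ⟨h1, h2, h3, h4⟩
        have hdb : d ≠ b := fun hh => hnotblea (hh ▸ h4)
        exact ⟨h1, ((hstat d hdb h1.2).2).1 h2, h3, h4⟩
      · rintro ⟨h1, h2, h3, h4⟩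
        have hdb : d ≠ b := fun hh => hnotblea (hh ▸ h4)
        exact ⟨h1, ((hstat d hdb h1.2).2).2 h2, h3, h4⟩
    rw [hwinA, hwinR]
    exact hcond
  refine ⟨exists_good_addable e s bp' i ⟨a, hsurv'⟩, ?_, hii⟩
  -- part 2 : residue i - 1
  have hA'fin : {d : Box | IsAddable bp' d ∧ ((content s d : ZMod e) = i - 1)}.Finite :=
    (addRem_finite bp').subset (fun d hd => Or.inl hd.1)
  have hRm1fin : {d : Box | IsRemovable bp d ∧ ((content s d : ZMod e) = i - 1)}.Finite :=
    (addRem_finite bp).subset (fun d hd => Or.inr hd.1)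
  have hAm1fin : {d : Box | IsAddable bp d ∧ ((content s d : ZMod e) = i - 1)}.Finite :=
    (addRem_finite bp).subset (fun d hd => Or.inl hd.1)
  have hAsub : {d : Box | IsAddable bp d ∧ ((content s d : ZMod e) = i - 1)}
      ⊆ {d : Box | IsAddable bp' d ∧ ((content s d : ZMod e) = i - 1)} := by
    rintro ⟨j, r, c⟩ ⟨hda, hdres⟩
    refine ⟨?_, hdres⟩
    by_cases hc : j = b.1
    · subst hc
      by_cases hr1 : r = b.2.1
      · subst hr1
        exfalso
        have hcY : c = b.2.2 := (st_add_x_bp hbadd c).1 hda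
        have hdb : ((b.1, b.2.1, c) : Box) = b := by rw [hcY]
        rw [hdb, hires] at hdres
        exact hii hdres
      · by_cases hr2 : r = b.2.1 + 1
        · subst hr2
          exact (st_add_x1 hbadd hbp' c).2 ((st_add_x1_bp hbadd c).1 hda).1
        · exact (st_add_far (d := (b.1, r, c)) hbp' rfl hr1 hr2).2 hda
    · exact ((st_other (d := (j, r, c)) hbp' hc).1).2 hda
  have hRsub : {d : Box | IsRemovable bp' d ∧ ((content s d : ZMod e) = i - 1)}
      ⊆ {d : Box | IsRemovable bp d ∧ ((content s d : ZMod e) = i - 1)} := by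
    rintro ⟨j, r, c⟩ ⟨hdr, hdres⟩
    refine ⟨?_, hdres⟩
    by_cases hc : j = b.1
    · subst hc
      by_cases hr1 : r = b.2.1
      · subst hr1
        exfalso
        have hcY : c = b.2.2 := (st_rem_x hbadd hbp' c).1 hdr
        have hdb : ((b.1, b.2.1, c) : Box) = b := by rw [hcY]
        rw [hdb, hires] at hdres
        exact hii hdres
      · by_cases hr3 : r + 1 = b.2.1
        · have hx1 : 1 ≤ b.2.1 := by omega
          have hrr : r = b.2.1 - 1 := by omega
          subst hrr
          exact (st_rem_x1'_bp hbadd hx1 c).2 ((st_rem_x1' hbadd hbp' hx1 c).1 hdr).1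
        · exact (st_rem_far (d := (b.1, r, c)) hbp' rfl hr1 hr3).1 hdr
    · exact ((st_other (d := (j, r, c)) hbp' hc).2).1 hdr
  have hbalm1 := hbal (i - 1) him1
  have hcount : {d : Box | IsRemovable bp' d ∧ ((content s d : ZMod e) = i - 1)}.ncard + 1
      ≤ {d : Box | IsAddable bp' d ∧ ((content s d : ZMod e) = i - 1)}.ncard := by
    by_cases hbeta : (comp bp b.1).part (b.2.1 + 1) = b.2.2
    · have hn1add' : IsAddable bp' ((b.1, b.2.1 + 1, b.2.2) : Box) :=
        (st_add_x1 hbadd hbp' b.2.2).2 hbeta.symm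
      have hn1not : ¬ IsAddable bp ((b.1, b.2.1 + 1, b.2.2) : Box) := by
        rw [st_add_x1_bp hbadd]
        rintro ⟨-, h⟩
        omega
      have hn1res : (content s ((b.1, b.2.1 + 1, b.2.2) : Box) : ZMod e) = i - 1 := by
        have h1 : content s ((b.1, b.2.1 + 1, b.2.2) : Box) = content s b - 1 := by
          simp only [content]
          omega
        rw [h1]
        push_cast
        rw [hires]
      have hins : insert ((b.1, b.2.1 + 1, b.2.2) : Box)
            {d : Box | IsAddable bp d ∧ ((content s d : ZMod e) = i - 1)}
          ⊆ {d : Box | IsAddable bp' d ∧ ((content s d : ZMod e) = i - 1)} := by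
        intro d hd
        rcases hd with rfl | hd
        · exact ⟨hn1add', hn1res⟩
        · exact hAsub hd
      have hlhs : {d : Box | IsRemovable bp' d ∧ ((content s d : ZMod e) = i - 1)}.ncard
          ≤ {d : Box | IsRemovable bp d ∧ ((content s d : ZMod e) = i - 1)}.ncard :=
        Set.ncard_le_ncard hRsub hRm1fin
      have hmid : (insert ((b.1, b.2.1 + 1, b.2.2) : Box)
            {d : Box | IsAddable bp d ∧ ((content s d : ZMod e) = i - 1)}).ncard
          = {d : Box | IsAddable bp d ∧ ((content s d : ZMod e) = i - 1)}.ncard + 1 :=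
        Set.ncard_insert_of_notMem (fun h => hn1not h.1) hAm1fin
      have hrhs : (insert ((b.1, b.2.1 + 1, b.2.2) : Box)
            {d : Box | IsAddable bp d ∧ ((content s d : ZMod e) = i - 1)}).ncard
          ≤ {d : Box | IsAddable bp' d ∧ ((content s d : ZMod e) = i - 1)}.ncard :=
        Set.ncard_le_ncard hins hA'fin
      omega
    · have hylt : (comp bp b.1).part (b.2.1 + 1) < b.2.2 :=
        lt_of_le_of_ne (part_x1_le hbadd) hbeta
      have hy1 : 1 ≤ b.2.2 := by omega
      have hd1rem : IsRemovable bp ((b.1, b.2.1, b.2.2 - 1) : Box) :=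
        (st_rem_x_bp hbadd (b.2.2 - 1)).2 ⟨by omega, by omega⟩
      have hd1not : ¬ IsRemovable bp' ((b.1, b.2.1, b.2.2 - 1) : Box) := by
        rw [st_rem_x hbadd hbp']
        omega
      have hd1res : (content s ((b.1, b.2.1, b.2.2 - 1) : Box) : ZMod e) = i - 1 := by
        have h1 : content s ((b.1, b.2.1, b.2.2 - 1) : Box) = content s b - 1 := by
          simp only [content]
          omega
        rw [h1]
        push_cast
        rw [hires]
      have hd1mem : ((b.1, b.2.1, b.2.2 - 1) : Box)
          ∈ {d : Box | IsRemovable bp d ∧ ((content s d : ZMod e) = i - 1)} :=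
        ⟨hd1rem, hd1res⟩
      have hssub : {d : Box | IsRemovable bp' d ∧ ((content s d : ZMod e) = i - 1)}
          ⊂ {d : Box | IsRemovable bp d ∧ ((content s d : ZMod e) = i - 1)} :=
        (Set.ssubset_iff_of_subset hRsub).2
          ⟨_, hd1mem, fun hcontra => hd1not hcontra.1⟩
      have h1 := Set.ncard_lt_ncard hssub hRm1fin
      have h2 : {d : Box | IsAddable bp d ∧ ((content s d : ZMod e) = i - 1)}.ncard
          ≤ {d : Box | IsAddable bp' d ∧ ((content s d : ZMod e) = i - 1)}.ncard :=
        Set.ncard_le_ncard hAsub hA'fin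
      omega
  have heq' := residue_equation e s bp' (i - 1)
  rcases Set.eq_empty_or_nonempty {d : Box | SurvivingAddable e s bp' (i - 1) d} with
    hempty | ⟨d0, hd0⟩
  · exfalso
    rw [hempty, Set.ncard_empty] at heq'
    omega
  · exact exists_good_addable e s bp' (i - 1) ⟨d0, hd0⟩



end GUnBranching
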